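/- Let D = (x_1,...,x_n) be reals with x_1 ≤ x_2 ≤ ⋯ ≤ x_n and n ≥ 2. Then for every index i, min{ Var(D − x_1), Var(D − x_n) } ≤ Var(D − x_i), where D − x_j denotes the multiset D with the entry x_j removed. -/

import Mathlib

/-- Mean of a finite multiset of reals (0 for the empty multiset). -/
noncomputable def mMean (s : Multiset ℝ) : ℝ := s.sum / (Multiset.card s : ℝ)

/-- Variance of a finite multiset of reals (0 for the empty multiset). -/
noncomputable def mVar (s : Multiset ℝ) : ℝ :=
  ((s.map (fun x => (x - mMean s) ^ 2)).sum) / (Multiset.card s : ℝ)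

lemma sum_sq_sub (t : Multiset ℝ) (c : ℝ) :
    (t.map (fun x => (x - c)^2)).sum
      = (t.map (fun x => x^2)).sum - 2*c*t.sum + (Multiset.card t : ℝ) * c^2 := by
  induction t using Multiset.induction with
  | empty => simp
  | cons a t ih => simp [ih]; ring

lemma mVar_eq (t : Multiset ℝ) (h : t ≠ 0) :
    mVar t = (t.map (fun x => x^2)).sum / (Multiset.card t : ℝ)
      - (t.sum / (Multiset.card t : ℝ))^2 := by
  have hm : (Multiset.card t : ℝ) ≠ 0 := by
    simpa using Multiset.card_pos.2 h |>.ne'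
  rw [mVar, mMean, sum_sq_sub]
  field_simp
  ring

lemma erase_sum (s : Multiset ℝ) (a : ℝ) (h : a ∈ s) : (s.erase a).sum = s.sum - a := by
  conv_rhs => rw [← Multiset.cons_erase h]
  simp

lemma erase_sq_sum (s : Multiset ℝ) (a : ℝ) (h : a ∈ s) :
    ((s.erase a).map (fun x => x^2)).sum = (s.map (fun x => x^2)).sum - a^2 := by
  conv_rhs => rw [← Multiset.cons_erase h]
  simp

lemma mVar_erase (s : Multiset ℝ) (a : ℝ) (h : a ∈ s) (h2 : 2 ≤ Multiset.card s) :
    mVar (s.erase a) = ((s.map (fun x => x^2)).sum - a^2) / ((Multiset.card s : ℝ) - 1)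
      - ((s.sum - a) / ((Multiset.card s : ℝ) - 1))^2 := by
  have hc : Multiset.card (s.erase a) = Multiset.card s - 1 := Multiset.card_erase_of_mem h
  have hne : s.erase a ≠ 0 := by
    intro h0
    have := congrArg Multiset.card h0
    rw [hc] at this
    simp at this; omega
  rw [mVar_eq _ hne, erase_sum _ _ h, erase_sq_sum _ _ h, hc]
  have : ((Multiset.card s - 1 : ℕ) : ℝ) = (Multiset.card s : ℝ) - 1 := by
    push_cast [Nat.cast_sub (by omega : 1 ≤ Multiset.card s)]; ring
  rw [this]

lemma key (Q S m p q t : ℝ) (hm : 0 < m) (hpt : p ≤ t) (htq : t ≤ q) :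
    min ((Q - p^2)/m - ((S - p)/m)^2) ((Q - q^2)/m - ((S - q)/m)^2)
      ≤ (Q - t^2)/m - ((S - t)/m)^2 := by
  by_contra hcon
  push_neg at hcon
  rw [lt_min_iff] at hcon
  obtain ⟨h1, h2⟩ := hcon
  have hm2 : (0:ℝ) < m^2 := by positivity
  have hrw : ∀ a : ℝ, (Q - a^2)/m - ((S - a)/m)^2 = (m*(Q - a^2) - (S - a)^2)/m^2 := by
    intro a; field_simp
  simp only [hrw] at h1 h2
  rw [div_lt_div_iff_of_pos_right hm2] at h1 h2
  have e1 : (t - p) * ((m+1)*(t+p) - 2*S) > 0 := by nlinarith [h1]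
  have e2 : (q - t) * (2*S - (m+1)*(q+t)) > 0 := by nlinarith [h2]
  have hA : (m+1)*(t+p) - 2*S > 0 := by
    rcases mul_pos_iff.1 e1 with ⟨_, h⟩ | ⟨h, _⟩
    · exact h
    · linarith
  have hB : 2*S - (m+1)*(q+t) > 0 := by
    rcases mul_pos_iff.1 e2 with ⟨_, h⟩ | ⟨h, _⟩
    · exact h
    · linarith
  nlinarith [mul_le_mul_of_nonneg_left (le_trans hpt htq) (by linarith : (0:ℝ) ≤ m + 1)]

/-- For sorted reals `x₁ ≤ ⋯ ≤ xₙ` (`n ≥ 2`), removing either the minimum or the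
maximum entry achieves the smallest variance among all single-entry removals. -/
theorem stmt2 (n : ℕ) (hn : 2 ≤ n) (x : Fin n → ℝ) (hmono : Monotone x) (i : Fin n) :
    min (mVar ((List.ofFn x : Multiset ℝ).erase (x ⟨0, by omega⟩)))
        (mVar ((List.ofFn x : Multiset ℝ).erase (x ⟨n - 1, by omega⟩)))
      ≤ mVar ((List.ofFn x : Multiset ℝ).erase (x i)) := by
  set s : Multiset ℝ := (List.ofFn x : Multiset ℝ) with hs
  have hcard : Multiset.card s = n := by simp [hs]
  have hmem : ∀ j : Fin n, x j ∈ s := by intro j; simp [hs, List.mem_ofFn]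
  have h2 : 2 ≤ Multiset.card s := by omega
  rw [mVar_erase s _ (hmem _) h2, mVar_erase s _ (hmem _) h2, mVar_erase s _ (hmem _) h2, hcard]
  exact key _ _ _ _ _ _ (by push_cast; linarith [show (2:ℝ) ≤ n by exact_mod_cast hn])
    (hmono (by simp [Fin.le_def] : (⟨0, by omega⟩ : Fin n) ≤ i))
    (hmono (by simp [Fin.le_def]; omega : i ≤ (⟨n - 1, by omega⟩ : Fin n)))
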